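/- In the USLT model (the UISLT model with α_i = 1 for all i, so that (n−1)β_j ≤ 1 for every j), for any A₀ ⊆ V with |A₀| = K and V \ A₀ = {j_1, …, j_k}, the expected influence satisfies σ^(V, A₀) = K + K ∑_{m=0}^{k-1} f^{m+1}(β_{j_1}, …, β_{j_k}). -/

import Mathlib

open Finset

noncomputable def cPath {V : Type*} [Fintype V] [DecidableEq V]
    (w : V → V → ℝ) (W D : Finset V) (j : V) : ℝ := by
  classical
  exact ∑' k : ℕ, ∑ x : Fin (k + 1) → V,
    if x 0 = j ∧ Function.Injective x ∧
        (∀ m : Fin (k + 1), (m : ℕ) < k → x m ∈ W \ D) ∧ x (Fin.last k) ∈ D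
    then ∏ i : Fin k, w (x i.succ) (x i.castSucc) else 0

noncomputable def cPathVia {V : Type*} [Fintype V] [DecidableEq V]
    (w : V → V → ℝ) (W D : Finset V) (j v : V) : ℝ := by
  classical
  exact ∑' k : ℕ, ∑ x : Fin (k + 1) → V,
    if x 0 = j ∧ Function.Injective x ∧
        (∀ m : Fin (k + 1), (m : ℕ) < k → x m ∈ W \ D) ∧ x (Fin.last k) ∈ D ∧
        (∃ u : Fin (k + 1), (u : ℕ) < k ∧ x u = v)
    then ∏ i : Fin k, w (x i.succ) (x i.castSucc) else 0

noncomputable def sigmaInfl {V : Type*} [Fintype V] [DecidableEq V]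
    (w : V → V → ℝ) (W A : Finset V) : ℝ :=
  ∑ j ∈ W, cPath w W A j

def pjv {V : Type*} (w : V → V → ℝ) (j v : V) : List V → ℝ
  | [] => w v j
  | l :: ls => w l j * pjv w l v ls

noncomputable def fPoly {ι : Type*} [DecidableEq ι] (m : ℕ) (T : Finset ι) (x : ι → ℝ) : ℝ :=
  (Nat.factorial m : ℝ) * ∑ S ∈ T.powersetCard m, ∏ s ∈ S, x s

set_option linter.unusedSectionVars false
section Aux
variable {V : Type*} [Fintype V] [DecidableEq V]

noncomputable def innerSum (w : V → V → ℝ) (W D : Finset V) (j : V) (k : ℕ) : ℝ := by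
  classical
  exact ∑ x : Fin (k + 1) → V,
    if x 0 = j ∧ Function.Injective x ∧
        (∀ m : Fin (k + 1), (m : ℕ) < k → x m ∈ W \ D) ∧ x (Fin.last k) ∈ D
    then ∏ i : Fin k, w (x i.succ) (x i.castSucc) else 0

lemma cPath_eq_tsum (w : V → V → ℝ) (W D : Finset V) (j : V) :
    cPath w W D j = ∑' k : ℕ, innerSum w W D j k := rfl

lemma innerSum_vanish (w : V → V → ℝ) (W D : Finset V) (j : V) (k : ℕ)
    (hk : Fintype.card V ≤ k) : innerSum w W D j k = 0 := by
  classical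
  refine Finset.sum_eq_zero fun x _ => ?_
  rw [if_neg]
  rintro ⟨-, hinj, -, -⟩
  have := Fintype.card_le_of_injective x hinj
  simp only [Fintype.card_fin] at this
  omega

lemma summable_innerSum (w : V → V → ℝ) (W D : Finset V) (j : V) :
    Summable (innerSum w W D j) :=
  summable_of_ne_finset_zero (s := Finset.range (Fintype.card V)) fun k hk =>
    innerSum_vanish w W D j k (by simpa using hk)

lemma innerSum_zero_mem (w : V → V → ℝ) (W D : Finset V) (j : V) (hj : j ∈ D) :
    innerSum w W D j 0 = 1 := by
  classical
  rw [innerSum]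
  rw [Finset.sum_eq_single (fun _ => j)]
  · rw [if_pos]
    · simp
    · have hms : ∀ m : Fin (0+1), m = 0 := fun m => Fin.ext (by omega)
      refine ⟨rfl, fun a b _ => by rw [hms a, hms b], fun m hm => absurd hm (by omega), hj⟩
  · intro x _ hx
    rw [if_neg]
    rintro ⟨h0, -, -, -⟩
    have hms : ∀ m : Fin (0+1), m = 0 := fun m => Fin.ext (by omega)
    exact hx (funext fun m => by rw [hms m, h0])
  · intro h; exact absurd (Finset.mem_univ _) h

lemma innerSum_zero_not_mem (w : V → V → ℝ) (W D : Finset V) (j : V) (hj : j ∉ D) :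
    innerSum w W D j 0 = 0 := by
  classical
  refine Finset.sum_eq_zero fun x _ => ?_
  rw [if_neg]
  rintro ⟨h0, -, -, hlast⟩
  exact hj (by rwa [show Fin.last 0 = 0 from rfl, h0] at hlast)

lemma innerSum_succ_mem (w : V → V → ℝ) (W D : Finset V) (j : V) (hj : j ∈ D) (k : ℕ) :
    innerSum w W D j (k + 1) = 0 := by
  classical
  refine Finset.sum_eq_zero fun x _ => ?_
  rw [if_neg]
  rintro ⟨h0, -, hmem, -⟩
  have := hmem 0 (by simp)
  rw [h0] at this
  exact (Finset.mem_sdiff.1 this).2 hj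

lemma innerSum_not_mem_W (w : V → V → ℝ) (W D : Finset V) (j : V) (hj : j ∉ D) (hjW : j ∉ W)
    (k : ℕ) : innerSum w W D j k = 0 := by
  classical
  refine Finset.sum_eq_zero fun x _ => ?_
  rw [if_neg]
  rintro ⟨h0, -, hmem, hlast⟩
  rcases Nat.eq_zero_or_pos k with hk | hk
  · subst hk
    exact hj (by rwa [show Fin.last 0 = 0 from rfl, h0] at hlast)
  · have := hmem 0 (by simpa using hk)
    rw [h0] at this
    exact hjW (Finset.mem_sdiff.1 this).1

lemma innerSum_succ_eq (w : V → V → ℝ) {W D : Finset V} {j : V} (hjD : j ∉ D) (hjW : j ∈ W)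
    (k : ℕ) :
    innerSum w W D j (k + 1) = ∑ v : V, w v j * innerSum w (W.erase j) D v k := by
  classical
  have prodeq : ∀ t : Fin (k + 1) → V,
      (∏ i : Fin (k+1), w ((Fin.cons j t : Fin (k+2) → V) i.succ)
        ((Fin.cons j t : Fin (k+2) → V) i.castSucc))
      = w (t 0) j * ∏ i : Fin k, w (t i.succ) (t i.castSucc) := by
    intro t
    have h0 : w ((Fin.cons j t : Fin (k+2) → V) (0:Fin (k+1)).succ)
        ((Fin.cons j t : Fin (k+2) → V) (0:Fin (k+1)).castSucc) = w (t 0) j := by simp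
    rw [Fin.prod_univ_succ, h0]
    refine congrArg _ (Finset.prod_congr rfl fun i _ => ?_)
    rw [← Fin.succ_castSucc, Fin.cons_succ, Fin.cons_succ]
  have condiff : ∀ t : Fin (k + 1) → V,
      ((Fin.cons j t : Fin (k+2) → V) 0 = j ∧ Function.Injective (Fin.cons j t : Fin (k+2) → V) ∧
        (∀ m : Fin (k + 2), (m : ℕ) < k + 1 → (Fin.cons j t : Fin (k+2) → V) m ∈ W \ D) ∧
        (Fin.cons j t : Fin (k+2) → V) (Fin.last (k+1)) ∈ D)
      ↔ (Function.Injective t ∧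
        (∀ m : Fin (k + 1), (m : ℕ) < k → t m ∈ (W.erase j) \ D) ∧ t (Fin.last k) ∈ D) := by
    intro t
    have hlasteq : (Fin.cons j t : Fin (k+2) → V) (Fin.last (k+1)) = t (Fin.last k) := by
      rw [← Fin.succ_last, Fin.cons_succ]
    constructor
    · rintro ⟨-, hinj, hmem, hlast⟩
      obtain ⟨hjr, hinjt⟩ := Fin.cons_injective_iff.1 hinj
      refine ⟨hinjt, fun m hm => ?_, by rwa [hlasteq] at hlast⟩
      have h1 : (Fin.cons j t : Fin (k+2) → V) m.succ ∈ W \ D := by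
        apply hmem
        simpa using Nat.succ_lt_succ hm
      rw [Fin.cons_succ] at h1
      rw [Finset.mem_sdiff] at h1 ⊢
      exact ⟨Finset.mem_erase.2 ⟨fun h => hjr ⟨m, h⟩, h1.1⟩, h1.2⟩
    · rintro ⟨hinjt, hmem, hlast⟩
      have hjr : j ∉ Set.range t := by
        rintro ⟨m, hm⟩
        by_cases hmk : (m : ℕ) < k
        · exact (Finset.mem_erase.1 (Finset.mem_sdiff.1 (hmem m hmk)).1).1 hm
        · have : m = Fin.last k := by
            apply Fin.ext; rw [Fin.val_last]; have := m.isLt; omega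
          rw [this] at hm
          rw [hm] at hlast
          exact hjD hlast
      refine ⟨Fin.cons_zero _ _, Fin.cons_injective_iff.2 ⟨hjr, hinjt⟩, fun m hm => ?_,
        by rwa [hlasteq]⟩
      induction m using Fin.cases with
      | zero => simpa using Finset.mem_sdiff.2 ⟨hjW, hjD⟩
      | succ i =>
        rw [Fin.cons_succ]
        have hik : (i : ℕ) < k := by simpa using hm
        have := Finset.mem_sdiff.1 (hmem i hik)
        exact Finset.mem_sdiff.2 ⟨(Finset.mem_erase.1 this.1).2, this.2⟩
  have rhs : ∀ v : V, w v j * innerSum w (W.erase j) D v k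
      = ∑ t : Fin (k+1) → V,
          (if t 0 = v ∧ Function.Injective t ∧
              (∀ m : Fin (k+1), (m:ℕ) < k → t m ∈ (W.erase j) \ D) ∧ t (Fin.last k) ∈ D
           then w v j * ∏ i : Fin k, w (t i.succ) (t i.castSucc) else 0) := by
    intro v
    rw [innerSum, Finset.mul_sum]
    exact Finset.sum_congr rfl fun t _ => by rw [mul_ite, mul_zero]
  rw [Finset.sum_congr rfl (fun v _ => rhs v), Finset.sum_comm]
  have collapse : ∀ t : Fin (k+1) → V,
      (∑ v : V, if t 0 = v ∧ Function.Injective t ∧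
          (∀ m : Fin (k+1), (m:ℕ) < k → t m ∈ (W.erase j) \ D) ∧ t (Fin.last k) ∈ D
        then w v j * ∏ i : Fin k, w (t i.succ) (t i.castSucc) else 0)
      = (if Function.Injective t ∧
          (∀ m : Fin (k+1), (m:ℕ) < k → t m ∈ (W.erase j) \ D) ∧ t (Fin.last k) ∈ D
        then w (t 0) j * ∏ i : Fin k, w (t i.succ) (t i.castSucc) else 0) := by
    intro t
    rw [Finset.sum_eq_single (t 0)]
    · simp
    · intro v _ hv
      rw [if_neg]
      rintro ⟨h0, -⟩
      exact hv h0.symm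
    · intro h; exact absurd (Finset.mem_univ _) h
  rw [Finset.sum_congr rfl (fun t _ => collapse t)]
  rw [innerSum]
  rw [← Equiv.sum_comp (Fin.consEquiv fun _ => V)]
  rw [Fintype.sum_prod_type]
  rw [Finset.sum_eq_single j]
  · refine Finset.sum_congr rfl fun t _ => ?_
    have he : (Fin.consEquiv fun _ => V) (j, t) = (Fin.cons j t : Fin (k+2) → V) := rfl
    rw [he]
    by_cases hC : Function.Injective t ∧
        (∀ m : Fin (k+1), (m:ℕ) < k → t m ∈ (W.erase j) \ D) ∧ t (Fin.last k) ∈ D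
    · rw [if_pos ((condiff t).2 hC), if_pos hC, prodeq]
    · rw [if_neg (fun h => hC ((condiff t).1 h)), if_neg hC]
  · intro v _ hv
    refine Finset.sum_eq_zero fun t _ => ?_
    rw [if_neg]
    rintro ⟨h0, -⟩
    have : (Fin.consEquiv fun _ => V) (v, t) 0 = v := rfl
    rw [this] at h0
    exact hv h0
  · intro h; exact absurd (Finset.mem_univ _) h

lemma cPath_of_mem (w : V → V → ℝ) (W D : Finset V) {j : V} (hj : j ∈ D) :
    cPath w W D j = 1 := by
  rw [cPath_eq_tsum, tsum_eq_single 0]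
  · exact innerSum_zero_mem w W D j hj
  · intro k hk
    obtain ⟨k', rfl⟩ := Nat.exists_eq_succ_of_ne_zero hk
    exact innerSum_succ_mem w W D j hj k'

lemma cPath_of_not_mem_W (w : V → V → ℝ) (W D : Finset V) {j : V} (hjD : j ∉ D)
    (hjW : j ∉ W) : cPath w W D j = 0 := by
  rw [cPath_eq_tsum]
  have : ∀ k : ℕ, innerSum w W D j k = 0 := innerSum_not_mem_W w W D j hjD hjW
  rw [tsum_congr this, tsum_zero]

lemma cPath_rec (w : V → V → ℝ) (W D : Finset V) {j : V} (hjD : j ∉ D) (hjW : j ∈ W) :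
    cPath w W D j = ∑ v : V, w v j * cPath w (W.erase j) D v := by
  rw [cPath_eq_tsum, Summable.tsum_eq_zero_add (summable_innerSum w W D j),
    innerSum_zero_not_mem w W D j hjD, zero_add,
    tsum_congr (innerSum_succ_eq w hjD hjW),
    Summable.tsum_finsetSum (fun v _ => (summable_innerSum w (W.erase j) D v).mul_left _)]
  refine Finset.sum_congr rfl fun v _ => ?_
  rw [tsum_mul_left, cPath_eq_tsum]

lemma fPoly_zero (T : Finset V) (x : V → ℝ) : fPoly 0 T x = 1 := by
  simp [fPoly]

lemma fPoly_vanish {T : Finset V} {m : ℕ} (h : T.card < m) (x : V → ℝ) : fPoly m T x = 0 := by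
  rw [fPoly, Finset.powersetCard_eq_empty.2 h]
  simp

lemma fPoly_succ (x : V → ℝ) (T : Finset V) (m : ℕ) :
    ∑ v ∈ T, x v * fPoly m (T.erase v) x = fPoly (m+1) T x := by
  classical
  have h1 : ∑ v ∈ T, ∑ S ∈ (T.erase v).powersetCard m, (x v * ∏ s ∈ S, x s)
      = ∑ S ∈ T.powersetCard (m+1), ∑ v ∈ S, ∏ s ∈ S, x s := by
    rw [Finset.sum_sigma', Finset.sum_sigma']
    refine Finset.sum_nbij' (fun p => ⟨insert p.1 p.2, p.1⟩) (fun q => ⟨q.2, q.1.erase q.2⟩)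
      ?_ ?_ ?_ ?_ ?_
    · rintro ⟨v, S⟩ hp
      rw [Finset.mem_sigma] at hp ⊢
      obtain ⟨hv, hS⟩ := hp
      rw [Finset.mem_powersetCard] at hS
      have hvS : v ∉ S := fun h => (Finset.mem_erase.1 (hS.1 h)).1 rfl
      refine ⟨Finset.mem_powersetCard.2 ⟨?_, ?_⟩, Finset.mem_insert_self _ _⟩
      · exact Finset.insert_subset hv (hS.1.trans (Finset.erase_subset _ _))
      · rw [Finset.card_insert_of_notMem hvS, hS.2]
    · rintro ⟨S, v⟩ hq
      rw [Finset.mem_sigma] at hq ⊢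
      obtain ⟨hS, hv⟩ := hq
      rw [Finset.mem_powersetCard] at hS
      refine ⟨hS.1 hv, Finset.mem_powersetCard.2 ⟨?_, ?_⟩⟩
      · exact fun a ha => Finset.mem_erase.2
          ⟨(Finset.mem_erase.1 ha).1, hS.1 (Finset.mem_of_mem_erase ha)⟩
      · rw [Finset.card_erase_of_mem hv, hS.2]
        omega
    · rintro ⟨v, S⟩ hp
      rw [Finset.mem_sigma] at hp
      have hvS : v ∉ S := fun h =>
        (Finset.mem_erase.1 ((Finset.mem_powersetCard.1 hp.2).1 h)).1 rfl
      simp [Finset.erase_insert hvS]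
    · rintro ⟨S, v⟩ hq
      rw [Finset.mem_sigma] at hq
      simp [Finset.insert_erase hq.2]
    · rintro ⟨v, S⟩ hp
      rw [Finset.mem_sigma] at hp
      have hvS : v ∉ S := fun h =>
        (Finset.mem_erase.1 ((Finset.mem_powersetCard.1 hp.2).1 h)).1 rfl
      exact (Finset.prod_insert hvS).symm
  have h2 : ∑ S ∈ T.powersetCard (m+1), ∑ v ∈ S, ∏ s ∈ S, x s
      = ((m:ℝ)+1) * ∑ S ∈ T.powersetCard (m+1), ∏ s ∈ S, x s := by
    rw [Finset.mul_sum]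
    refine Finset.sum_congr rfl fun S hS => ?_
    rw [Finset.sum_const, (Finset.mem_powersetCard.1 hS).2, nsmul_eq_mul]
    push_cast
    ring
  calc ∑ v ∈ T, x v * fPoly m (T.erase v) x
      = (m.factorial : ℝ) * ∑ v ∈ T, ∑ S ∈ (T.erase v).powersetCard m, (x v * ∏ s ∈ S, x s) := by
        rw [Finset.mul_sum]
        refine Finset.sum_congr rfl fun v _ => ?_
        rw [fPoly, Finset.mul_sum, Finset.mul_sum, Finset.mul_sum]
        exact Finset.sum_congr rfl fun S _ => by ring
    _ = (m.factorial : ℝ) * (((m:ℝ)+1) * ∑ S ∈ T.powersetCard (m+1), ∏ s ∈ S, x s) := by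
        rw [h1, h2]
    _ = fPoly (m+1) T x := by
        rw [fPoly, Nat.factorial_succ]
        push_cast
        ring

noncomputable def bigG (x : V → ℝ) (T : Finset V) : ℝ :=
  ∑ m ∈ Finset.range (Fintype.card V + 1), fPoly m T x

lemma bigG_aux (x : V → ℝ) (T : Finset V) :
    ∑ v ∈ T, x v * bigG x (T.erase v)
      = ∑ m ∈ Finset.range (Fintype.card V + 1), fPoly (m+1) T x := by
  rw [Finset.sum_congr rfl (fun v _ => by rw [bigG, Finset.mul_sum]), Finset.sum_comm]
  exact Finset.sum_congr rfl fun m _ => fPoly_succ x T m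

lemma bigG_eq (x : V → ℝ) (T : Finset V) :
    bigG x T = 1 + ∑ v ∈ T, x v * bigG x (T.erase v) := by
  rw [bigG_aux, bigG, Finset.sum_range_succ' (fun m => fPoly m T x), fPoly_zero,
    Finset.sum_range_succ (fun m => fPoly (m+1) T x),
    fPoly_vanish (lt_of_le_of_lt (Finset.card_le_univ T) (by simp [Finset.card_univ])) x]
  ring

lemma cPath_closed (β : V → ℝ) (W : Finset V) : ∀ (D : Finset V) (j : V),
    cPath (fun _ i => β i) W D j =
      if j ∈ D then 1
      else if j ∈ W then β j * (D.card : ℝ) * bigG β ((W \ D).erase j) else 0 := by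
  induction W using Finset.strongInduction with
  | _ W ih =>
    intro D j
    by_cases hjD : j ∈ D
    · rw [cPath_of_mem _ _ _ hjD, if_pos hjD]
    by_cases hjW : j ∈ W
    swap
    · rw [cPath_of_not_mem_W _ _ _ hjD hjW, if_neg hjD, if_neg hjW]
    rw [if_neg hjD, if_pos hjW, cPath_rec _ _ _ hjD hjW]
    have hW' : W.erase j ⊂ W := Finset.erase_ssubset hjW
    set T : Finset V := (W \ D).erase j with hT
    have hTsd : (W.erase j) \ D = T := Finset.erase_sdiff_comm W D j
    have step1 : ∀ v : V, (fun _ i => β i) v j * cPath (fun _ i => β i) (W.erase j) D v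
        = β j * ((if v ∈ D then (1:ℝ) else 0)
            + (if v ∈ T then β v * (D.card : ℝ) * bigG β (T.erase v) else 0)) := by
      intro v
      rw [ih _ hW', hTsd]
      by_cases hvD : v ∈ D
      · have hvT : v ∉ T := fun h => (Finset.mem_sdiff.1 (Finset.mem_of_mem_erase h)).2 hvD
        rw [if_pos hvD, if_pos hvD, if_neg hvT]
        ring
      · rw [if_neg hvD, if_neg hvD]
        have hvT : v ∈ W.erase j ↔ v ∈ T := by
          rw [← hTsd, Finset.mem_sdiff]
          exact ⟨fun h => ⟨h, hvD⟩, fun h => h.1⟩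
        by_cases hvW : v ∈ W.erase j
        · rw [if_pos hvW, if_pos (hvT.1 hvW)]
          ring
        · rw [if_neg hvW, if_neg (fun h => hvW (hvT.2 h))]
          ring
    rw [Finset.sum_congr rfl (fun v _ => step1 v), ← Finset.mul_sum, Finset.sum_add_distrib]
    rw [Finset.sum_ite_mem, Finset.univ_inter, Finset.sum_ite_mem, Finset.univ_inter]
    rw [Finset.sum_const, nsmul_eq_mul, mul_one]
    have : ∑ v ∈ T, β v * (D.card : ℝ) * bigG β (T.erase v)
        = (D.card : ℝ) * ∑ v ∈ T, β v * bigG β (T.erase v) := by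
      rw [Finset.mul_sum]
      exact Finset.sum_congr rfl fun v _ => by ring
    rw [this, bigG_eq β T]
    ring

end Aux


theorem stmt14 (n K k : ℕ) (β : Fin n → ℝ) (hβ : ∀ i, 0 ≤ β i)
    (hsum : ∀ j : Fin n, ((n : ℝ) - 1) * β j ≤ 1)
    (A₀ : Finset (Fin n)) (hK : A₀.card = K) (hk : k = n - K)
    (jf : Fin k → Fin n) (hjf : Function.Injective jf)
    (hjfim : Finset.image jf Finset.univ = Finset.univ \ A₀) :
    sigmaInfl (fun _ j => β j) Finset.univ A₀
      = (K : ℝ) + (K : ℝ) *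
          ∑ m ∈ Finset.range k,
            fPoly (m + 1) (Finset.univ : Finset (Fin k)) (fun l => β (jf l)) := by
  classical
  subst hK
  have hKn : A₀.card ≤ n := by simpa using Finset.card_le_univ A₀
  have hTcard : (Finset.univ \ A₀).card = k := by
    rw [Finset.card_sdiff_of_subset (Finset.subset_univ _), Finset.card_univ, Fintype.card_fin, hk]
  rw [sigmaInfl]
  have hstep : ∀ j : Fin n, cPath (fun _ j => β j) Finset.univ A₀ j
      = (if j ∈ A₀ then (1:ℝ) else 0)
        + (if j ∈ Finset.univ \ A₀ then
            β j * (A₀.card : ℝ) * bigG β ((Finset.univ \ A₀).erase j) else 0) := by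
    intro j
    rw [cPath_closed β Finset.univ A₀ j]
    by_cases hj : j ∈ A₀
    · rw [if_pos hj, if_pos hj,
        if_neg (fun h => (Finset.mem_sdiff.1 h).2 hj), add_zero]
    · rw [if_neg hj, if_neg hj, if_pos (Finset.mem_univ j),
        if_pos (Finset.mem_sdiff.2 ⟨Finset.mem_univ j, hj⟩), zero_add]
  rw [Finset.sum_congr rfl fun j _ => hstep j, Finset.sum_add_distrib,
    Finset.sum_ite_mem, Finset.univ_inter, Finset.sum_ite_mem, Finset.univ_inter,
    Finset.sum_const, nsmul_eq_mul, mul_one]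
  congr 1
  have h1 : ∑ j ∈ Finset.univ \ A₀, β j * (A₀.card : ℝ) * bigG β ((Finset.univ \ A₀).erase j)
      = (A₀.card : ℝ) * ∑ j ∈ Finset.univ \ A₀, β j * bigG β ((Finset.univ \ A₀).erase j) := by
    rw [Finset.mul_sum]
    exact Finset.sum_congr rfl fun v _ => by ring
  rw [h1, bigG_aux]
  congr 1
  have hkn : k ≤ Fintype.card (Fin n) + 1 := by rw [Fintype.card_fin]; omega
  have hzero : ∀ m ∈ Finset.range (Fintype.card (Fin n) + 1), m ∉ Finset.range k →
      fPoly (m+1) (Finset.univ \ A₀) β = 0 := by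
    intro m _ hm2
    rw [Finset.mem_range, not_lt] at hm2
    exact fPoly_vanish (by rw [hTcard]; omega) β
  rw [← Finset.sum_subset (Finset.range_subset_range.2 hkn) hzero]
  refine Finset.sum_congr rfl fun m _ => ?_
  have hTmap : Finset.univ \ A₀ = Finset.map ⟨jf, hjf⟩ Finset.univ := by
    rw [Finset.map_eq_image]
    exact hjfim.symm
  rw [hTmap, fPoly, fPoly, Finset.powersetCard_map, Finset.sum_map]
  refine congrArg _ (Finset.sum_congr rfl fun S _ => ?_)
  have hme : (Finset.mapEmbedding (⟨jf, hjf⟩ : Fin k ↪ Fin n)).toEmbedding S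
      = Finset.map ⟨jf, hjf⟩ S := Finset.mapEmbedding_apply
  rw [hme, Finset.prod_map]
  rfl
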